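/- For every integer r ≥ 1 there exists a constant C > 0 such that for all integers n ≥ 2, d ≥ 1, z ≥ 1 with d + z ≤ n, letting w > 0 be the unique positive real with w·e^w = d·ln n, there exists a t × n binary (d, r; z]-disjunct matrix with t ≤ C·( r·d·ln(n)/w + z )^{r+1}. -/

import Mathlib

/-- An `m × n` binary matrix `M` is `(d, r; z]`-disjunct if for every pair of disjoint
sets `S1`, `S2` of column indices with `|S1| = d` and `|S2| = r`, there are at least `z`
rows in which every column indexed by `S2` has entry 1 and every column indexed by `S1`
has entry 0. -/
def Disjunct (m n d r z : ℕ) (M : Fin m → Fin n → Bool) : Prop :=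
  ∀ S1 S2 : Finset (Fin n), Disjoint S1 S2 → S1.card = d → S2.card = r →
    z ≤ (Finset.univ.filter fun i : Fin m =>
      (∀ j ∈ S2, M i j = true) ∧ ∀ j ∈ S1, M i j = false).card

/-- The Reed–Solomon-style deterministic construction of a `(d, r; z]`-disjunct matrix.
Columns are (encoded as) polynomials of degree `< k` over `ZMod p`; rows are pairs
`(i, a)` of an evaluation point `i < L` and an `r`-tuple `a` of field elements; the
entry is `1` iff the value of the column polynomial at `i` appears among the tuple. -/
lemma disjunct_construction (n d r z k L p : ℕ) (hp : p.Prime) (hk : 0 < k)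
    (hLp : L ≤ p) (hnpk : n ≤ p ^ k) (hL : d * r * (k - 1) + z ≤ L) :
    ∃ M : Fin (L * p ^ r) → Fin n → Bool, Disjunct (L * p ^ r) n d r z M := by
  classical
  haveI : Fact p.Prime := ⟨hp⟩
  haveI : NeZero p := ⟨hp.pos.ne'⟩
  -- an injective encoding of columns as coefficient vectors
  have hcard : Fintype.card (Fin n) ≤ Fintype.card (Fin k → ZMod p) := by
    simpa [ZMod.card] using hnpk
  obtain ⟨emb⟩ := Function.Embedding.nonempty_of_card_le hcard
  -- the evaluation points
  set x : Fin L → ZMod p := fun i => ((i : ℕ) : ZMod p) with hxdef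
  have hx : Function.Injective x := by
    intro i j hij
    have h1 := congrArg ZMod.val hij
    rw [hxdef] at h1
    simp only at h1
    rw [ZMod.val_cast_of_lt (lt_of_lt_of_le i.isLt hLp),
      ZMod.val_cast_of_lt (lt_of_lt_of_le j.isLt hLp)] at h1
    exact Fin.ext h1
  -- the column polynomials
  set P : Fin n → Polynomial (ZMod p) :=
    fun c => ∑ m : Fin k, Polynomial.monomial (m : ℕ) (emb c m) with hPdef
  have hcoeff : ∀ c (m : Fin k), (P c).coeff (m : ℕ) = emb c m := by
    intro c m
    rw [hPdef]
    simp only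
    rw [Polynomial.finset_sum_coeff]
    rw [Finset.sum_eq_single m]
    · simp [Polynomial.coeff_monomial]
    · intro b _ hb
      rw [Polynomial.coeff_monomial, if_neg (by simpa [Fin.val_inj] using hb)]
    · intro h
      exact absurd (Finset.mem_univ m) h
  have hdegP : ∀ c : Fin n, (P c).natDegree ≤ k - 1 := by
    intro c
    rw [hPdef]
    apply Polynomial.natDegree_sum_le_of_forall_le
    intro m _
    refine le_trans (Polynomial.natDegree_monomial_le _) ?_
    have := m.isLt
    omega
  -- number of agreements between two distinct column polynomials
  have hagree : ∀ u v : Fin n, u ≠ v →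
      (Finset.univ.filter fun i : Fin L =>
        (P u).eval (x i) = (P v).eval (x i)).card ≤ k - 1 := by
    intro u v huv
    by_contra hcon
    push_neg at hcon
    have hQdeg : (P u - P v).natDegree ≤ k - 1 :=
      le_trans (Polynomial.natDegree_sub_le _ _) (max_le (hdegP u) (hdegP v))
    have hQ0 : P u - P v = 0 := by
      apply Polynomial.eq_zero_of_natDegree_lt_card_of_eval_eq_zero' _
        ((Finset.univ.filter fun i : Fin L =>
          (P u).eval (x i) = (P v).eval (x i)).image x)
      · intro y hy
        obtain ⟨i, hi, rfl⟩ := Finset.mem_image.mp hy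
        have h2 := (Finset.mem_filter.mp hi).2
        simp [Polynomial.eval_sub, sub_eq_zero, h2]
      · rw [Finset.card_image_of_injective _ hx]
        omega
    have hPP : P u = P v := sub_eq_zero.mp hQ0
    apply huv
    apply emb.injective
    funext m
    rw [← hcoeff u m, ← hcoeff v m, hPP]
  -- the row index equivalence
  have hcardR : Fintype.card (Fin L × (Fin r → ZMod p)) = L * p ^ r := by
    simp [ZMod.card]
  let e : (Fin L × (Fin r → ZMod p)) ≃ Fin (L * p ^ r) :=
    Fintype.equivFinOfCardEq hcardR
  refine ⟨fun τ c => decide (∃ m : Fin r,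
    (P c).eval (x (e.symm τ).1) = (e.symm τ).2 m), ?_⟩
  intro S1 S2 hdisj hS1 hS2
  -- the enumeration of S2
  let o := S2.orderIsoOfFin hS2
  -- good evaluation points
  set G := Finset.univ.filter (fun i : Fin L =>
    ∀ u ∈ S1, ∀ v ∈ S2, (P u).eval (x i) ≠ (P v).eval (x i)) with hGdef
  set Bad := (S1 ×ˢ S2).biUnion (fun uv => Finset.univ.filter fun i : Fin L =>
    (P uv.1).eval (x i) = (P uv.2).eval (x i)) with hBaddef
  have hGcard : z ≤ G.card := by
    have hsub : (Finset.univ : Finset (Fin L)) ⊆ G ∪ Bad := by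
      intro i _
      rw [Finset.mem_union]
      by_cases hgood : ∀ u ∈ S1, ∀ v ∈ S2, (P u).eval (x i) ≠ (P v).eval (x i)
      · exact Or.inl (Finset.mem_filter.mpr ⟨Finset.mem_univ _, hgood⟩)
      · push_neg at hgood
        obtain ⟨u, hu, v, hv, huv⟩ := hgood
        exact Or.inr (Finset.mem_biUnion.mpr ⟨(u, v), Finset.mem_product.mpr ⟨hu, hv⟩,
          Finset.mem_filter.mpr ⟨Finset.mem_univ _, huv⟩⟩)
    have hL' : L ≤ G.card + Bad.card := by
      calc L = (Finset.univ : Finset (Fin L)).card := by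
              rw [Finset.card_univ, Fintype.card_fin]
        _ ≤ (G ∪ Bad).card := Finset.card_le_card hsub
        _ ≤ G.card + Bad.card := Finset.card_union_le _ _
    have hbadcard : Bad.card ≤ d * r * (k - 1) := by
      calc Bad.card ≤ ∑ uv ∈ S1 ×ˢ S2, (Finset.univ.filter fun i : Fin L =>
            (P uv.1).eval (x i) = (P uv.2).eval (x i)).card := Finset.card_biUnion_le
        _ ≤ ∑ _uv ∈ S1 ×ˢ S2, (k - 1) := by
            apply Finset.sum_le_sum
            intro uv huv
            obtain ⟨hu, hv⟩ := Finset.mem_product.mp huv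
            apply hagree
            intro h
            exact Finset.disjoint_left.mp hdisj hu (h ▸ hv)
        _ = d * r * (k - 1) := by
            rw [Finset.sum_const, Finset.card_product, hS1, hS2, smul_eq_mul]
    omega
  refine le_trans hGcard ?_
  apply Finset.card_le_card_of_injOn
    (fun i => e (i, fun m => (P ((o m : Fin n))).eval (x i)))
  · intro i hi
    rw [hGdef, Finset.mem_coe, Finset.mem_filter] at hi
    have hgood := hi.2
    simp only [Finset.mem_coe, Finset.mem_filter, Finset.mem_univ, true_and, Equiv.symm_apply_apply,
      decide_eq_true_eq, decide_eq_false_iff_not]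
    constructor
    · intro c hc
      refine ⟨o.symm ⟨c, hc⟩, ?_⟩
      simp
    · intro c hc
      rintro ⟨m, hm⟩
      exact hgood c hc (o m : Fin n) (o m).2 hm
  · intro i _ i' _ hii
    have h2 := e.injective hii
    exact (Prod.ext_iff.mp h2).1

set_option maxHeartbeats 1000000 in
/-- for every `r ≥ 1` there is a constant `C > 0` such that for all
`n ≥ 2`, `d ≥ 1`, `z ≥ 1` with `d + z ≤ n`, letting `w` be the Lambert-W value with
`w·e^w = d·ln n`, there is a `t × n` binary `(d, r; z]`-disjunct matrix with
`t ≤ C·(r·d·ln(n)/w + z)^{r+1}`. -/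
theorem improved_disjunct_exists (r : ℕ) (hr : 1 ≤ r) :
    ∃ C : ℝ, 0 < C ∧ ∀ n d z : ℕ, 2 ≤ n → 1 ≤ d → 1 ≤ z → d + z ≤ n →
      ∀ w : ℝ, 0 < w → w * Real.exp w = d * Real.log n →
        ∃ t : ℕ, ∃ M : Fin t → Fin n → Bool, Disjunct t n d r z M ∧
          (t : ℝ) ≤ C * (r * d * Real.log n / w + z) ^ (r + 1) := by
  refine ⟨(2 * r + 2 : ℝ) ^ (r + 1), by positivity, ?_⟩
  intro n d z hn hd hz hdzn w hw hwe
  have hrR : (1 : ℝ) ≤ (r : ℝ) := by exact_mod_cast hr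
  have hdR : (1 : ℝ) ≤ (d : ℝ) := by exact_mod_cast hd
  have hzR : (1 : ℝ) ≤ (z : ℝ) := by exact_mod_cast hz
  have hnR : (2 : ℝ) ≤ (n : ℝ) := by exact_mod_cast hn
  have hlogn : 0 < Real.log n := Real.log_pos (by linarith)
  -- w ≤ log n
  have hwlog : w ≤ Real.log n := by
    by_contra hcon
    push_neg at hcon
    have h1 : (n : ℝ) < Real.exp w := by
      calc (n : ℝ) = Real.exp (Real.log n) := (Real.exp_log (by linarith)).symm
        _ < Real.exp w := Real.exp_lt_exp.mpr hcon
    have hdn : (d : ℝ) ≤ (n : ℝ) - 1 := by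
      have h2 : d + 1 ≤ n := le_trans (by omega) hdzn
      have h3 := (Nat.cast_le (α := ℝ)).mpr h2
      push_cast at h3
      linarith
    nlinarith [Real.exp_pos w]
  have hexpw : Real.exp w = (d : ℝ) * Real.log n / w := by
    field_simp
    linarith [hwe]
  set X : ℝ := (r : ℝ) * (d : ℝ) * Real.log n / w with hXdef
  have hX0 : 0 < X := by
    rw [hXdef]
    apply div_pos _ hw
    positivity
  have hXd : (d : ℝ) * Real.log n / w ≤ X := by
    have h0 : 0 < (d : ℝ) * Real.log n / w := by positivity
    calc (d : ℝ) * Real.log n / w = 1 * ((d : ℝ) * Real.log n / w) := by ring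
      _ ≤ (r : ℝ) * ((d : ℝ) * Real.log n / w) := by nlinarith
      _ = X := by rw [hXdef]; ring
  -- the parameters of the construction
  set k : ℕ := ⌈(r : ℝ) * Real.log n / w⌉₊ with hkdef
  have hkpos0 : 0 < (r : ℝ) * Real.log n / w := by positivity
  have hk1 : 0 < k := by rw [hkdef]; exact Nat.ceil_pos.mpr hkpos0
  have hklb : (r : ℝ) * Real.log n / w ≤ (k : ℝ) := by rw [hkdef]; exact Nat.le_ceil _
  have hkub : (k : ℝ) < (r : ℝ) * Real.log n / w + 1 := by
    rw [hkdef]; exact Nat.ceil_lt_add_one (le_of_lt hkpos0)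
  set L : ℕ := d * r * (k - 1) + z with hLdef
  have hL1 : 1 ≤ L := by rw [hLdef]; omega
  set E : ℕ := ⌈Real.exp (w / r)⌉₊ with hEdef
  set m : ℕ := max L E with hmdef
  have hLm : L ≤ m := le_max_left _ _
  have hEm : E ≤ m := le_max_right _ _
  have hm0 : m ≠ 0 := by omega
  obtain ⟨p, hp, hmp, hp2m⟩ := Nat.exists_prime_lt_and_le_two_mul m hm0
  have hLp : L ≤ p := le_trans hLm (le_of_lt hmp)
  have hEp : E ≤ p := le_trans hEm (le_of_lt hmp)
  -- n ≤ p ^ k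
  have hrpos : (0 : ℝ) < (r : ℝ) := by linarith
  have hnpk : n ≤ p ^ k := by
    have h1 : (n : ℝ) ≤ (Real.exp (w / r)) ^ k := by
      calc (n : ℝ) = Real.exp (Real.log n) := (Real.exp_log (by linarith)).symm
        _ ≤ Real.exp ((k : ℝ) * (w / r)) := by
            apply Real.exp_le_exp.mpr
            have h2 : (r : ℝ) * Real.log n ≤ (k : ℝ) * w := by
              have hklb' := hklb
              rw [div_le_iff₀ hw] at hklb'
              linarith
            rw [← mul_div_assoc, le_div_iff₀ hrpos]
            nlinarith
        _ = (Real.exp (w / r)) ^ k := Real.exp_nat_mul _ k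
    have h2 : (Real.exp (w / r)) ^ k ≤ (E : ℝ) ^ k :=
      pow_le_pow_left₀ (le_of_lt (Real.exp_pos _)) (by rw [hEdef]; exact Nat.le_ceil _) k
    have h3 : ((E : ℝ)) ^ k ≤ (p : ℝ) ^ k :=
      pow_le_pow_left₀ (by positivity) (by exact_mod_cast hEp) k
    have h4 : (n : ℝ) ≤ ((p ^ k : ℕ) : ℝ) := by push_cast; linarith
    exact_mod_cast h4
  -- the matrix
  obtain ⟨M, hM⟩ := disjunct_construction n d r z k L p hp hk1 hLp hnpk (le_of_eq hLdef.symm)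
  refine ⟨L * p ^ r, M, hM, ?_⟩
  -- the real bounds
  have hkm1 : ((k - 1 : ℕ) : ℝ) ≤ (r : ℝ) * Real.log n / w := by
    have hc : ((k - 1 : ℕ) : ℝ) = (k : ℝ) - 1 := by
      rw [Nat.cast_sub hk1]; norm_num
    rw [hc]
    linarith
  have hLreal : (L : ℝ) ≤ (r : ℝ) * X + z := by
    have hc : (L : ℝ) = (d : ℝ) * (r : ℝ) * ((k - 1 : ℕ) : ℝ) + (z : ℝ) := by
      rw [hLdef]; push_cast; ring
    rw [hc]
    have hdr : (0 : ℝ) ≤ (d : ℝ) * (r : ℝ) := by positivity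
    calc (d : ℝ) * (r : ℝ) * ((k - 1 : ℕ) : ℝ) + (z : ℝ)
        ≤ (d : ℝ) * (r : ℝ) * ((r : ℝ) * Real.log n / w) + (z : ℝ) := by nlinarith
      _ = (r : ℝ) * X + z := by rw [hXdef]; ring
  have hEreal : (E : ℝ) ≤ X + z := by
    have h1 : (E : ℝ) < Real.exp (w / r) + 1 := by
      rw [hEdef]; exact Nat.ceil_lt_add_one (le_of_lt (Real.exp_pos _))
    have h2 : Real.exp (w / r) ≤ Real.exp w := by
      apply Real.exp_le_exp.mpr
      rw [div_le_iff₀ hrpos]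
      exact le_mul_of_one_le_right (le_of_lt hw) hrR
    have h3 : Real.exp w ≤ X := by rw [hexpw]; exact hXd
    linarith
  have hpreal : (p : ℝ) ≤ 2 * ((r : ℝ) * X + z) := by
    have hmreal : (m : ℝ) ≤ (r : ℝ) * X + z := by
      rw [hmdef, Nat.cast_max]
      apply max_le hLreal (le_trans hEreal (by nlinarith))
    have h5 : (p : ℝ) ≤ 2 * (m : ℝ) := by exact_mod_cast hp2m
    linarith
  -- the final bound
  have ht : ((L * p ^ r : ℕ) : ℝ) = (L : ℝ) * (p : ℝ) ^ r := by push_cast; ring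
  rw [ht]
  have hXz : (0 : ℝ) < X + z := by linarith
  set B : ℝ := (2 * (r : ℝ) + 2) * (X + z) with hBdef
  have hB0 : 0 < B := by rw [hBdef]; apply mul_pos (by linarith) hXz
  have hLB : (L : ℝ) ≤ B := by
    refine le_trans hLreal ?_
    rw [hBdef]
    nlinarith
  have hpB : (p : ℝ) ≤ B := by
    refine le_trans hpreal ?_
    rw [hBdef]
    nlinarith
  calc (L : ℝ) * (p : ℝ) ^ r ≤ B * B ^ r := by
        apply mul_le_mul hLB (pow_le_pow_left₀ (by positivity) hpB r) (by positivity)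
          (le_of_lt hB0)
    _ = B ^ (r + 1) := by rw [pow_succ]; ring
    _ = (2 * (r : ℝ) + 2) ^ (r + 1) * (X + z) ^ (r + 1) := by rw [hBdef, mul_pow]
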